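/- Let q = (2e+1)·t with integers e ≥ 0 and t ≥ 2, and let d be a positive divisor of t. There exists an additive subgroup C of Z_q^2 that is a perfect e-code and is isomorphic as an additive group to ZMod(t/d) × ZMod(t·d) if and only if d divides gcd(2e+1, t). -/

import Mathlib

set_option maxHeartbeats 1000000


/-- Lee distance on `ZMod q`. -/
def leeDist {q : ℕ} (x y : ZMod q) : ℕ := min (x - y).val (q - (x - y).val)

/-- Maximum (Chebyshev) distance on `(ZMod q)^n`. -/
def maxDist {q n : ℕ} (x y : Fin n → ZMod q) : ℕ :=
  Finset.univ.sup fun i => leeDist (x i) (y i)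

/-- `C` is a perfect `e`-code: every point is within distance `e` of exactly one codeword. -/
def IsPerfectCode {q n : ℕ} (e : ℕ) (C : Set (Fin n → ZMod q)) : Prop :=
  ∀ x : Fin n → ZMod q, ∃! c, c ∈ C ∧ maxDist x c ≤ e

private lemma zsmul_natCast (q c : ℕ) (z : ℤ) :
    z • ((c : ZMod q)) = ((z * c : ℤ) : ZMod q) := by
  push_cast [zsmul_eq_mul]; ring

private lemma intEqZero (s δ : ℤ) (hs : 0 < s) (h : s ∣ δ) (h1 : -s < δ) (h2 : δ < s) : δ = 0 := by
  obtain ⟨c, rfl⟩ := h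
  have hc1 : ¬ (1 ≤ c) := by intro h; nlinarith
  have hc2 : ¬ (c ≤ -1) := by intro h; nlinarith
  have : c = 0 := by omega
  simp [this]

private lemma lee_le_of_int {q e : ℕ} [NeZero q] (hq : 2*e < q) (w : ℤ)
    (hw1 : -(e:ℤ) ≤ w) (hw2 : w ≤ e) (x y : ZMod q) (hxy : x - y = (w : ZMod q)) :
    leeDist x y ≤ e := by
  unfold leeDist
  rw [hxy]
  have hv : (((w : ZMod q)).val : ℤ) = w % q := ZMod.val_intCast w
  have hq0 : (0:ℤ) < q := by exact_mod_cast (NeZero.pos q)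
  rcases le_or_gt 0 w with h | h
  · rw [Int.emod_eq_of_lt h (by omega)] at hv
    omega
  · have h2 : w % (q:ℤ) = (w + q) % q := by
      rw [show w + (q:ℤ) = w + q * 1 by ring, Int.add_mul_emod_self_left]
    rw [h2, Int.emod_eq_of_lt (by omega) (by omega)] at hv
    omega

private lemma lee_inv {q e : ℕ} [NeZero q] (x y : ZMod q) (h : leeDist x y ≤ e) :
    ∃ w : ℤ, -(e:ℤ) ≤ w ∧ w ≤ e ∧ x - y = (w : ZMod q) := by
  unfold leeDist at h
  have hv : x - y = (((x-y).val : ℕ) : ZMod q) := by rw [ZMod.natCast_val, ZMod.cast_id]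
  have hlt := ZMod.val_lt (x - y)
  rcases le_or_gt ((x-y).val) e with hc | hc
  · exact ⟨((x-y).val : ℤ), by omega, by omega, by exact_mod_cast hv⟩
  · refine ⟨((x-y).val : ℤ) - q, by omega, by omega, ?_⟩
    rw [Int.cast_sub, Int.cast_natCast, Int.cast_natCast, ZMod.natCast_self, sub_zero]
    exact hv

private lemma code_aux (e d m k : ℕ) (hd : 0 < d) (hm : 0 < m) (hk : 2*e+1 = d*k) :
    ∃ C : AddSubgroup (Fin 2 → ZMod ((2*e+1)*(d*m))),
      (∀ x : Fin 2 → ZMod ((2*e+1)*(d*m)), ∃! c, c ∈ (C : Set _) ∧ maxDist x c ≤ e) ∧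
      Nonempty (C ≃+ (ZMod m × ZMod (d*m*d))) := by
  have hk0 : 0 < k := by
    rcases Nat.eq_zero_or_pos k with h | h
    · subst h; simp at hk
    · exact h
  haveI : NeZero ((2*e+1)*(d*m)) := ⟨by positivity⟩
  haveI : NeZero (d*m*d) := ⟨by positivity⟩
  haveI : NeZero m := ⟨hm.ne'⟩
  have hks : 2*(e:ℤ)+1 = (d:ℤ)*k := by exact_mod_cast hk
  set u' : Fin 2 → ZMod ((2*e+1)*(d*m)) := ![((d*(2*e+1) : ℕ) : ZMod ((2*e+1)*(d*m))), 0] with hu'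
  set v' : Fin 2 → ZMod ((2*e+1)*(d*m)) :=
    ![((2*e+1 : ℕ) : ZMod ((2*e+1)*(d*m))), ((k : ℕ) : ZMod ((2*e+1)*(d*m)))] with hv'
  have h1 : (zmultiplesHom (Fin 2 → ZMod ((2*e+1)*(d*m))) u') ((m:ℕ) : ℤ) = 0 := by
    simp only [zmultiplesHom_apply, hu', Matrix.smul_cons, Matrix.smul_empty, smul_zero,
      zsmul_natCast, Matrix.cons_eq_zero_iff]
    refine ⟨?_, trivial, Subsingleton.elim _ _⟩
    rw [ZMod.intCast_zmod_eq_zero_iff_dvd]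
    exact ⟨1, by push_cast; ring⟩
  have h2 : (zmultiplesHom (Fin 2 → ZMod ((2*e+1)*(d*m))) v') ((d*m*d : ℕ) : ℤ) = 0 := by
    simp only [zmultiplesHom_apply, hv', Matrix.smul_cons, Matrix.smul_empty, smul_zero,
      zsmul_natCast, Matrix.cons_eq_zero_iff]
    refine ⟨?_, ?_, Subsingleton.elim _ _⟩
    · rw [ZMod.intCast_zmod_eq_zero_iff_dvd]
      exact ⟨(d:ℤ), by push_cast; ring⟩
    · rw [ZMod.intCast_zmod_eq_zero_iff_dvd]
      refine ⟨1, ?_⟩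
      push_cast
      linear_combination (-(d:ℤ)*m)*hks
  set g := (ZMod.lift m ⟨zmultiplesHom _ u', h1⟩).coprod
      (ZMod.lift (d*m*d) ⟨zmultiplesHom _ v', h2⟩) with hg
  have geval : ∀ z₁ z₂ : ℤ, g ((z₁ : ZMod m), (z₂ : ZMod (d*m*d))) = z₁ • u' + z₂ • v' := by
    intro z₁ z₂
    simp [hg, AddMonoidHom.coprod_apply, ZMod.lift_coe, zmultiplesHom_apply]
  set ψ : ℤ → ℤ → (Fin 2 → ZMod ((2*e+1)*(d*m))) := fun i j =>
    ![(((i*(2*(e:ℤ)+1)) : ℤ) : ZMod ((2*e+1)*(d*m))),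
      (((i*(k:ℤ) + j*(2*(e:ℤ)+1)) : ℤ) : ZMod ((2*e+1)*(d*m)))] with hψ
  have combo : ∀ z₁ z₂ : ℤ, z₁ • u' + z₂ • v' = ψ (d*z₁ + z₂) (-z₁) := by
    intro z₁ z₂
    funext r
    fin_cases r
    · show (z₁ • u' + z₂ • v') 0 = ψ (d*z₁ + z₂) (-z₁) 0
      simp only [Pi.add_apply, Pi.smul_apply, hu', hv', hψ, Matrix.cons_val_zero, zsmul_natCast]
      rw [← Int.cast_add, ZMod.intCast_eq_intCast_iff_dvd_sub]
      refine ⟨0, ?_⟩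
      push_cast
      ring
    · show (z₁ • u' + z₂ • v') 1 = ψ (d*z₁ + z₂) (-z₁) 1
      simp only [Pi.add_apply, Pi.smul_apply, hu', hv', hψ, Matrix.cons_val_one,
        Matrix.head_cons, Matrix.cons_val_zero, smul_zero, zero_add, zsmul_natCast]
      rw [ZMod.intCast_eq_intCast_iff_dvd_sub]
      refine ⟨0, ?_⟩
      push_cast
      linear_combination (-z₁)*hks
  have hrange : ∀ x, x ∈ g.range ↔ ∃ i j : ℤ, x = ψ i j := by
    intro x
    constructor
    · rintro ⟨⟨I, J⟩, rfl⟩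
      refine ⟨d*(I.val:ℤ) + (J.val:ℤ), -(I.val:ℤ), ?_⟩
      have hI : (((I.val:ℤ)) : ZMod m) = I := by
        rw [Int.cast_natCast, ZMod.natCast_val, ZMod.cast_id]
      have hJ : (((J.val:ℤ)) : ZMod (d*m*d)) = J := by
        rw [Int.cast_natCast, ZMod.natCast_val, ZMod.cast_id]
      conv_lhs => rw [← hI, ← hJ]
      rw [geval, combo]
    · rintro ⟨i, j, rfl⟩
      refine ⟨(((-j : ℤ) : ZMod m), ((i + d*j : ℤ) : ZMod (d*m*d))), ?_⟩
      rw [geval, combo]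
      have e1 : (d:ℤ) * -j + (i + d*j) = i := by ring
      have e2 : -(-j) = j := by ring
      rw [e1, e2]
  have ginj : Function.Injective g := by
    rw [injective_iff_map_eq_zero]
    rintro ⟨I, J⟩ h0
    have hI : (((I.val:ℤ)) : ZMod m) = I := by
      rw [Int.cast_natCast, ZMod.natCast_val, ZMod.cast_id]
    have hJ : (((J.val:ℤ)) : ZMod (d*m*d)) = J := by
      rw [Int.cast_natCast, ZMod.natCast_val, ZMod.cast_id]
    rw [← hI, ← hJ, geval] at h0
    have hc1 := congrFun h0 1
    simp only [Pi.add_apply, Pi.smul_apply, hu', hv', Matrix.cons_val_one, Matrix.head_cons,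
      Matrix.cons_val_zero, smul_zero, zero_add, zsmul_natCast, Pi.zero_apply] at hc1
    rw [ZMod.intCast_zmod_eq_zero_iff_dvd] at hc1
    obtain ⟨c, hc⟩ := hc1
    push_cast at hc
    have hkz : ((k:ℤ)) ≠ 0 := Int.natCast_ne_zero.mpr hk0.ne'
    have hJc : (J.val : ℤ) = (d:ℤ)*m*d*c := by
      have h' : (k:ℤ) * ((J.val:ℤ) - (d:ℤ)*m*d*c) = 0 := by
        linear_combination hc + ((d:ℤ)*m*c)*hks
      have := (mul_eq_zero.mp h').resolve_left hkz
      linarith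
    have hJ0 : (J.val : ℤ) = 0 := by
      have hlt : ((J.val:ℤ)) < (d:ℤ)*m*d := by exact_mod_cast ZMod.val_lt J
      have hge : (0:ℤ) ≤ (J.val:ℤ) := Int.natCast_nonneg _
      have hpos : (0:ℤ) < (d:ℤ)*m*d := by positivity
      have hcc1 : ¬ (1 ≤ c) := by intro h; nlinarith
      have hcc2 : ¬ (c ≤ -1) := by intro h; nlinarith
      have : c = 0 := by omega
      rw [this] at hJc; simpa using hJc
    rw [hJ0, zero_smul, add_zero] at h0
    have hc0 := congrFun h0 0
    simp only [Pi.smul_apply, hu', Matrix.cons_val_zero, zsmul_natCast, Pi.zero_apply] at hc0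
    rw [ZMod.intCast_zmod_eq_zero_iff_dvd] at hc0
    obtain ⟨c', hc'⟩ := hc0
    push_cast at hc'
    have hI0 : (I.val : ℤ) = 0 := by
      have h' : ((2*(e:ℤ)+1) * d) * ((I.val:ℤ) - (m:ℤ)*c') = 0 := by
        linear_combination hc'
      have h'' := (mul_eq_zero.mp h').resolve_left (by positivity)
      have hIc : (I.val : ℤ) = (m:ℤ)*c' := by linarith
      have hlt : ((I.val:ℤ)) < (m:ℤ) := by exact_mod_cast ZMod.val_lt I
      have hge : (0:ℤ) ≤ (I.val:ℤ) := Int.natCast_nonneg _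
      have hpos : (0:ℤ) < (m:ℤ) := by exact_mod_cast hm
      have hcc1 : ¬ (1 ≤ c') := by intro h; nlinarith
      have hcc2 : ¬ (c' ≤ -1) := by intro h; nlinarith
      have : c' = 0 := by omega
      rw [this] at hIc; simpa using hIc
    have hIz : I = 0 := by
      rw [← ZMod.val_eq_zero]; exact_mod_cast hI0
    have hJz : J = 0 := by
      rw [← ZMod.val_eq_zero]; exact_mod_cast hJ0
    simp [hIz, hJz, Prod.ext_iff]
  refine ⟨g.range, ?_, ⟨(AddMonoidHom.ofInjective ginj).symm⟩⟩
  have hdm1 : 1 ≤ d*m := Nat.one_le_iff_ne_zero.mpr (Nat.mul_ne_zero hd.ne' hm.ne')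
  have hQe : 2*e < (2*e+1)*(d*m) := by nlinarith
  have maxIff : ∀ x c : Fin 2 → ZMod ((2*e+1)*(d*m)),
      (maxDist x c ≤ e ↔ leeDist (x 0) (c 0) ≤ e ∧ leeDist (x 1) (c 1) ≤ e) := by
    intro x c; simp [maxDist, Finset.sup_le_iff, Fin.forall_fin_two]
  intro x
  have hx0 : x 0 = (((x 0).val : ℤ) : ZMod ((2*e+1)*(d*m))) := by
    rw [Int.cast_natCast, ZMod.natCast_val, ZMod.cast_id]
  have hx1 : x 1 = (((x 1).val : ℤ) : ZMod ((2*e+1)*(d*m))) := by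
    rw [Int.cast_natCast, ZMod.natCast_val, ZMod.cast_id]
  set X₀ : ℤ := ((x 0).val : ℤ) with hX₀
  set X₁ : ℤ := ((x 1).val : ℤ) with hX₁
  set s' : ℤ := 2*(e:ℤ)+1 with hs'
  have hs'0 : (0:ℤ) < s' := by positivity
  have hdiv : ∀ X : ℤ, ∃ a w, X = a*s' + w ∧ -(e:ℤ) ≤ w ∧ w ≤ e := by
    intro X
    have h1 := Int.emod_nonneg (X+e) (ne_of_gt hs'0)
    have h2 := Int.emod_lt_of_pos (X+e) hs'0
    have h3 := Int.mul_ediv_add_emod (X+e) s'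
    have hcm : ((X+(e:ℤ))/s')*s' = s'*((X+e)/s') := mul_comm _ _
    exact ⟨(X+e)/s', X - ((X+e)/s')*s', by ring, by linarith, by linarith⟩
  obtain ⟨i, w₀, hieq, hw₀1, hw₀2⟩ := hdiv X₀
  obtain ⟨j, w₁, hjeq, hw₁1, hw₁2⟩ := hdiv (X₁ - i*k)
  have hψ0 : ∀ a b : ℤ, ψ a b 0 = ((a * s' : ℤ) : ZMod ((2*e+1)*(d*m))) := by
    intro a b; simp [hψ, hs']
  have hψ1 : ∀ a b : ℤ, ψ a b 1 = ((a * k + b * s' : ℤ) : ZMod ((2*e+1)*(d*m))) := by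
    intro a b; simp [hψ, hs']
  have hmem : ψ i j ∈ g.range := (hrange _).mpr ⟨i, j, rfl⟩
  have hdist0 : x 0 - ψ i j 0 = ((w₀ : ℤ) : ZMod ((2*e+1)*(d*m))) := by
    conv_lhs => rw [hx0]
    rw [hψ0, ← Int.cast_sub]
    congr 1
    linarith
  have hdist1 : x 1 - ψ i j 1 = ((w₁ : ℤ) : ZMod ((2*e+1)*(d*m))) := by
    conv_lhs => rw [hx1]
    rw [hψ1, ← Int.cast_sub]
    congr 1
    linarith
  refine ⟨ψ i j, ⟨hmem, ?_⟩, ?_⟩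
  · rw [maxIff]
    exact ⟨lee_le_of_int hQe w₀ hw₀1 hw₀2 _ _ hdist0,
      lee_le_of_int hQe w₁ hw₁1 hw₁2 _ _ hdist1⟩
  · rintro y ⟨hy_mem, hy_dist⟩
    obtain ⟨i', j', rfl⟩ := (hrange y).mp hy_mem
    rw [maxIff] at hy_dist
    obtain ⟨a₀, ha₀1, ha₀2, ha₀⟩ := lee_inv _ _ hy_dist.1
    obtain ⟨a₁, ha₁1, ha₁2, ha₁⟩ := lee_inv _ _ hy_dist.2
    have hE0 : (((i'*s' - i*s' : ℤ)) : ZMod ((2*e+1)*(d*m))) =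
        ((w₀ - a₀ : ℤ) : ZMod ((2*e+1)*(d*m))) := by
      rw [Int.cast_sub, Int.cast_sub, ← hψ0 i' j', ← hψ0 i j, ← hdist0, ← ha₀]
      ring
    rw [ZMod.intCast_eq_intCast_iff_dvd_sub] at hE0
    obtain ⟨z, hz⟩ := hE0
    push_cast at hz
    have hδ0 : w₀ - a₀ - (i'*s' - i*s') = s' * ((d:ℤ)*m) * z := by
      rw [hz, hs']
    have ha₀w : a₀ = w₀ := by
      have hdvd : s' ∣ (a₀ - w₀) := by
        refine ⟨(i - i') - (d:ℤ)*m*z, ?_⟩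
        linear_combination -hδ0
      have h0 := intEqZero s' _ hs'0 hdvd (by omega) (by omega)
      omega
    have hzero : w₀ - a₀ = 0 := by omega
    have hii : (i' - i) + (d:ℤ)*m*z = 0 := by
      have h' : s' * ((i' - i) + (d:ℤ)*m*z) = 0 := by
        linear_combination -hδ0 + hzero
      exact (mul_eq_zero.mp h').resolve_left (ne_of_gt hs'0)
    have hE1 : (((i'*k + j'*s' - (i*k + j*s') : ℤ)) : ZMod ((2*e+1)*(d*m))) =
        ((w₁ - a₁ : ℤ) : ZMod ((2*e+1)*(d*m))) := by
      rw [Int.cast_sub, Int.cast_sub, ← hψ1 i' j', ← hψ1 i j, ← hdist1, ← ha₁]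
      ring
    rw [ZMod.intCast_eq_intCast_iff_dvd_sub] at hE1
    obtain ⟨z₂, hz₂⟩ := hE1
    push_cast at hz₂
    have hδ1 : w₁ - a₁ - (i'*k + j'*s' - (i*k + j*s')) = s' * ((d:ℤ)*m) * z₂ := by
      rw [hz₂, hs']
    have ha₁w : a₁ = w₁ := by
      have hdvd : s' ∣ (a₁ - w₁) := by
        refine ⟨(j - j') + (m:ℤ)*z - (d:ℤ)*m*z₂, ?_⟩
        linear_combination -hδ1 - (k:ℤ)*hii - (m:ℤ)*z*hks
      have h0 := intEqZero s' _ hs'0 hdvd (by omega) (by omega)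
      omega
    have e0 : ψ i' j' 0 = ψ i j 0 := by
      have hsub : x 0 - ψ i' j' 0 = x 0 - ψ i j 0 := by
        rw [ha₀, hdist0, ha₀w]
      exact sub_right_injective hsub
    have e1 : ψ i' j' 1 = ψ i j 1 := by
      have hsub : x 1 - ψ i' j' 1 = x 1 - ψ i j 1 := by
        rw [ha₁, hdist1, ha₁w]
      exact sub_right_injective hsub
    funext r
    fin_cases r
    · exact e0
    · exact e1

/-- Admissible group structures of two-dimensional linear perfect codes:
`ZMod (t/d) × ZMod (t·d)` is realizable iff `d ∣ gcd(2e+1, t)`. -/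
theorem stmt7 (e t q d : ℕ) (ht : 2 ≤ t) (hq : q = (2 * e + 1) * t)
    (hd : 0 < d) (hdt : d ∣ t) :
    (∃ C : AddSubgroup (Fin 2 → ZMod q),
        IsPerfectCode e (C : Set (Fin 2 → ZMod q)) ∧
        Nonempty (C ≃+ (ZMod (t / d) × ZMod (t * d)))) ↔
    d ∣ Nat.gcd (2 * e + 1) t := by
  constructor
  · rintro ⟨C, -, ⟨φ⟩⟩
    haveI : NeZero (t*d) := ⟨by positivity⟩
    set y : C := φ.symm (0, 1) with hy
    have hqy' : (q:ℕ) • y = 0 := by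
      apply Subtype.ext
      push_cast
      funext r
      simp [nsmul_eq_mul, ZMod.natCast_self]
    have h2 : (q:ℕ) • ((0,1) : ZMod (t/d) × ZMod (t*d)) = 0 := by
      have h := congrArg φ hqy'
      rw [map_nsmul, map_zero, hy, AddEquiv.apply_symm_apply] at h
      exact h
    have h3 : ((q:ℕ) : ZMod (t*d)) = 0 := by
      have h := congrArg Prod.snd h2
      simpa [nsmul_eq_mul] using h
    rw [ZMod.natCast_eq_zero_iff] at h3
    subst hq
    obtain ⟨c, hc⟩ := h3
    have hdc : 2*e+1 = d*c := by
      have h : t*(2*e+1) = t*(d*c) := by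
        calc t*(2*e+1) = (2*e+1)*t := mul_comm _ _
        _ = t*d*c := hc
        _ = t*(d*c) := by ring
      exact Nat.eq_of_mul_eq_mul_left (by omega) h
    exact Nat.dvd_gcd ⟨c, hdc⟩ hdt
  · intro hgcd
    have hds : d ∣ (2*e+1) := dvd_trans hgcd (Nat.gcd_dvd_left _ _)
    obtain ⟨k, hk⟩ := hds
    obtain ⟨m, hmt⟩ := hdt
    have hm : 0 < m := by
      rcases Nat.eq_zero_or_pos m with h | h
      · subst h; simp at hmt; omega
      · exact h
    subst hq
    subst hmt
    obtain ⟨C, hC, hiso⟩ := code_aux e d m k hd hm hk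
    refine ⟨C, hC, ?_⟩
    rw [Nat.mul_div_cancel_left m hd]
    exact hiso
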